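/- Let K ⊂ ℝⁿ (n ≥ 2) be a compact convex body and for y ∈ ℝ let P_y = {x ∈ ℝ^{n−1} : (y,x) ∈ K} with |P_y| its (n−1)-dimensional Lebesgue measure. Then for all real a and nonnegative b, c: |P_{a+b}| · |P_{a+c}| ≥ |P_a| · |P_{a+b+c}|. -/

import Mathlib

open MeasureTheory Set
open scoped Pointwise

lemma vol_convex_real {I : Set ℝ} (hI : Convex ℝ I) (hne : I.Nonempty)
    (hba : BddAbove I) (hbb : BddBelow I) :
    volume I = ENNReal.ofReal (sSup I - sInf I) := by
  have h1 : I ⊆ Icc (sInf I) (sSup I) := fun x hx => ⟨csInf_le hbb hx, le_csSup hba hx⟩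
  have h2 : Ioo (sInf I) (sSup I) ⊆ I := by
    intro x hx
    obtain ⟨a, ha, hax⟩ := (csInf_lt_iff hbb hne).mp hx.1
    obtain ⟨b, hb, hxb⟩ := (lt_csSup_iff hba hne).mp hx.2
    exact hI.ordConnected.out ha hb ⟨hax.le, hxb.le⟩
  refine le_antisymm ?_ ?_
  · calc volume I ≤ volume (Icc (sInf I) (sSup I)) := measure_mono h1
      _ = ENNReal.ofReal (sSup I - sInf I) := Real.volume_Icc
  · calc ENNReal.ofReal (sSup I - sInf I) = volume (Ioo (sInf I) (sSup I)) := Real.volume_Ioo.symm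
      _ ≤ volume I := measure_mono h2

lemma sSup_smul_real {c : ℝ} (hc : 0 < c) (S : Set ℝ) (hne : S.Nonempty) (hba : BddAbove S) :
    sSup (c • S) = c * sSup S := by
  have h := (OrderIso.mulLeft₀ c hc).map_csSup' hne hba
  have him : (OrderIso.mulLeft₀ c hc) '' S = c • S := by
    ext x; simp [Set.mem_smul_set, eq_comm]
  rw [him] at h
  simpa using h.symm

lemma sInf_smul_real {c : ℝ} (hc : 0 < c) (S : Set ℝ) (hne : S.Nonempty) (hbb : BddBelow S) :
    sInf (c • S) = c * sInf S := by
  have h := (OrderIso.mulLeft₀ c hc).map_csInf' hne hbb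
  have him : (OrderIso.mulLeft₀ c hc) '' S = c • S := by
    ext x; simp [Set.mem_smul_set, eq_comm]
  rw [him] at h
  simpa using h.symm

lemma vol_comb_real {S T : Set ℝ} (hS : Convex ℝ S) (hT : Convex ℝ T)
    (hSne : S.Nonempty) (hTne : T.Nonempty)
    (hSa : BddAbove S) (hSb : BddBelow S) (hTa : BddAbove T) (hTb : BddBelow T)
    {t : ℝ} (ht0 : 0 < t) (ht1 : t < 1) :
    ENNReal.ofReal (1 - t) * volume S + ENNReal.ofReal t * volume T
      ≤ volume ((1 - t) • S + t • T) := by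
  have h1t : (0:ℝ) < 1 - t := by linarith
  have hS' := vol_convex_real hS hSne hSa hSb
  have hT' := vol_convex_real hT hTne hTa hTb
  have hC : Convex ℝ ((1 - t) • S + t • T) := (hS.smul _).add (hT.smul _)
  have hCne : ((1 - t) • S + t • T).Nonempty := (hSne.smul_set).add (hTne.smul_set)
  have hCa : BddAbove ((1 - t) • S + t • T) := (hSa.smul_of_nonneg h1t.le).add (hTa.smul_of_nonneg ht0.le)
  have hCb : BddBelow ((1 - t) • S + t • T) := (hSb.smul_of_nonneg h1t.le).add (hTb.smul_of_nonneg ht0.le)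
  rw [vol_convex_real hC hCne hCa hCb, hS', hT']
  rw [csSup_add hSne.smul_set (hSa.smul_of_nonneg h1t.le) hTne.smul_set (hTa.smul_of_nonneg ht0.le),
      csInf_add hSne.smul_set (hSb.smul_of_nonneg h1t.le) hTne.smul_set (hTb.smul_of_nonneg ht0.le),
      sSup_smul_real h1t S hSne hSa, sSup_smul_real ht0 T hTne hTa,
      sInf_smul_real h1t S hSne hSb, sInf_smul_real ht0 T hTne hTb]
  rw [← ENNReal.ofReal_mul h1t.le, ← ENNReal.ofReal_mul ht0.le, ← ENNReal.ofReal_add]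
  · apply ENNReal.ofReal_le_ofReal; ring_nf; rfl
  · have := sub_nonneg.mpr (csInf_le_csSup hSne hSb hSa); positivity
  · have := sub_nonneg.mpr (csInf_le_csSup hTne hTb hTa); positivity
open MeasureTheory Set
open scoped Pointwise ENNReal

section Slice
variable {d : ℕ}

noncomputable def eqv (d : ℕ) : (Fin (d+1) → ℝ) ≃ᵐ ℝ × (Fin d → ℝ) :=
  MeasurableEquiv.piFinSuccAbove (fun _ : Fin (d+1) => ℝ) 0

lemma eqv_symm_apply (y : ℝ) (w : Fin d → ℝ) : (eqv d).symm (y, w) = Fin.cons y w := by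
  simp [eqv, MeasurableEquiv.piFinSuccAbove, Fin.consEquiv]

lemma preimage_mk_image (A : Set (Fin (d+1) → ℝ)) (y : ℝ) :
    Prod.mk y ⁻¹' (eqv d '' A) = {w | Fin.cons y w ∈ A} := by
  ext w
  constructor
  · rintro ⟨x, hx, hxe⟩
    have : x = Fin.cons y w := by
      have := congrArg (eqv d).symm hxe
      simpa [eqv_symm_apply] using this
    simpa [← this]
  · intro hw
    exact ⟨Fin.cons y w, hw, by
      have := congrArg (eqv d) (eqv_symm_apply y w)
      simpa using this.symm⟩

lemma fubini_slice {A : Set (Fin (d+1) → ℝ)} (hA : MeasurableSet A) :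
    volume A = ∫⁻ y, volume {w : Fin d → ℝ | Fin.cons y w ∈ A} := by
  have hmp : MeasurePreserving (eqv d) :=
    volume_preserving_piFinSuccAbove (fun _ : Fin (d+1) => ℝ) 0
  have himg : MeasurableSet (eqv d '' A) := (eqv d).measurableSet_image.mpr hA
  have h1 : volume A = volume (eqv d '' A) := by
    rw [← hmp.measure_preimage himg.nullMeasurableSet]
    congr 1
    exact ((eqv d).preimage_image A).symm
  rw [h1, Measure.volume_eq_prod, Measure.prod_apply himg]
  simp_rw [preimage_mk_image]

lemma meas_slice_vol {A : Set (Fin (d+1) → ℝ)} (hA : MeasurableSet A) :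
    Measurable fun y => volume {w : Fin d → ℝ | Fin.cons y w ∈ A} := by
  have himg : MeasurableSet (eqv d '' A) := (eqv d).measurableSet_image.mpr hA
  have := measurable_measure_prodMk_left (ν := (volume : Measure (Fin d → ℝ))) himg
  simpa [preimage_mk_image] using this

end Slice

-- layer cake helper
lemma layercake_fin {α : Type*} [MeasurableSpace α] (μ : Measure α) [SigmaFinite μ]
    (φ : α → ℝ≥0∞) (hφ : Measurable φ) (C : ℝ≥0∞) (hC : C ≠ ∞) (hbd : ∀ y, φ y ≤ C) :
    ∫⁻ y, φ y ∂μ = ∫⁻ u in Ioi (0:ℝ), μ {y | ENNReal.ofReal u < φ y} := by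
  have hfin : ∀ y, φ y ≠ ∞ := fun y => ne_top_of_le_ne_top hC (hbd y)
  have h1 : ∀ y, ENNReal.ofReal ((φ y).toReal) = φ y := fun y => ENNReal.ofReal_toReal (hfin y)
  calc ∫⁻ y, φ y ∂μ = ∫⁻ y, ENNReal.ofReal ((φ y).toReal) ∂μ := by simp_rw [h1]
    _ = ∫⁻ u in Ioi (0:ℝ), μ {y | u < (φ y).toReal} := by
        refine lintegral_eq_lintegral_meas_lt μ (ae_of_all _ fun y => ENNReal.toReal_nonneg) ?_
        exact hφ.ennreal_toReal.aemeasurable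
    _ = ∫⁻ u in Ioi (0:ℝ), μ {y | ENNReal.ofReal u < φ y} := by
        refine setLIntegral_congr_fun measurableSet_Ioi (fun u hu => ?_)
        congr 1
        ext y
        simp only [mem_setOf_eq]
        rw [ENNReal.ofReal_lt_iff_lt_toReal (le_of_lt hu) (hfin y)]

-- scaling helper
lemma lintegral_scale_Ioi (G : ℝ → ℝ≥0∞) (hG : Measurable G) {c : ℝ} (hc : 0 < c) :
    ∫⁻ r in Ioi (0:ℝ), G (c * r) = ENNReal.ofReal c⁻¹ * ∫⁻ u in Ioi (0:ℝ), G u := by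
  have hmeas : Measurable fun r : ℝ => c * r := measurable_const_mul c
  have hmap : Measure.map (fun r : ℝ => c * r) (volume.restrict (Ioi 0)) =
      (ENNReal.ofReal c⁻¹) • (volume.restrict (Ioi (0:ℝ))) := by
    have hpre : (fun r : ℝ => c * r) ⁻¹' (Ioi 0) = Ioi 0 := by
      ext r
      simp only [mem_preimage, mem_Ioi]
      constructor
      · intro h; nlinarith
      · intro h; positivity
    have h2 : Measure.map (fun r : ℝ => c * r) (volume.restrict (Ioi 0)) =
        (Measure.map (fun r : ℝ => c * r) volume).restrict (Ioi 0) := by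
      rw [Measure.restrict_map hmeas measurableSet_Ioi, hpre]
    rw [h2, Real.map_volume_mul_left (ne_of_gt hc), Measure.restrict_smul,
        abs_of_pos (inv_pos.mpr hc)]
  calc ∫⁻ r in Ioi (0:ℝ), G (c * r) = ∫⁻ u, G u ∂(Measure.map (fun r => c * r) (volume.restrict (Ioi 0))) := by
        rw [lintegral_map hG hmeas]
    _ = ENNReal.ofReal c⁻¹ * ∫⁻ u in Ioi (0:ℝ), G u := by rw [hmap]; simp [lintegral_smul_measure]
open MeasureTheory Set
open scoped Pointwise ENNReal

lemma cons_comb {d : ℕ} (a b y z : ℝ) (w w' : Fin d → ℝ) :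
    a • (Fin.cons y w : Fin (d+1) → ℝ) + b • (Fin.cons z w' : Fin (d+1) → ℝ)
      = (Fin.cons (a*y + b*z) (a • w + b • w') : Fin (d+1) → ℝ) := by
  funext i
  refine Fin.cases ?_ (fun j => ?_) i <;> simp

lemma slice_comb {d : ℕ} {A B : Set (Fin (d+1) → ℝ)} (s t u v : ℝ) :
    s • {w : Fin d → ℝ | Fin.cons u w ∈ A} + t • {w : Fin d → ℝ | Fin.cons v w ∈ B}
      ⊆ {w : Fin d → ℝ | Fin.cons (s*u + t*v) w ∈ s • A + t • B} := by
  rintro x ⟨p, ⟨w1, hw1, rfl⟩, q, ⟨w2, hw2, rfl⟩, rfl⟩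
  show (Fin.cons (s*u + t*v) (s • w1 + t • w2) : Fin (d+1) → ℝ) ∈ s • A + t • B
  rw [← cons_comb]
  exact add_mem_add (smul_mem_smul_set hw1) (smul_mem_smul_set hw2)

lemma min_le_rpow_comb {x y w : ℝ} (hx : 0 < x) (hy : 0 < y) (hw0 : 0 ≤ w) (hw1 : w ≤ 1) :
    min x y ≤ x^(1-w) * y^w := by
  have hm : 0 < min x y := lt_min hx hy
  calc min x y = (min x y)^(1-w) * (min x y)^w := by
        rw [← Real.rpow_add hm]; simp
    _ ≤ x^(1-w) * y^w := by
        refine mul_le_mul (Real.rpow_le_rpow hm.le (min_le_left _ _) (by linarith))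
          (Real.rpow_le_rpow hm.le (min_le_right _ _) hw0) ?_ ?_
        · positivity
        · positivity

lemma cont_cons {d : ℕ} (y : ℝ) : Continuous (fun w : Fin d → ℝ => (Fin.cons y w : Fin (d+1) → ℝ)) := by
  refine continuous_pi fun i => ?_
  refine Fin.cases ?_ (fun j => ?_) i
  · simpa using continuous_const
  · simpa using continuous_apply j

lemma cont_tail {d : ℕ} : Continuous (fun x : Fin (d+1) → ℝ => Fin.tail x) :=
  continuous_pi fun i => continuous_apply i.succ


lemma amgm_final {a b m1 m2 t : ℝ} (ha : 0 < a) (hb : 0 < b) (h1 : 0 < m1) (h2 : 0 < m2)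
    (ht0 : 0 < t) (ht1 : t < 1) :
    a^(1-t) * b^t ≤ (1-t) * ((m1 / (m1^(1-t) * m2^t))⁻¹ * a)
      + t * ((m2 / (m1^(1-t) * m2^t))⁻¹ * b) := by
  set M := m1^(1-t)*m2^t with hM
  have hMpos : 0 < M := by positivity
  have hAMGM := Real.geom_mean_le_arith_mean2_weighted (by linarith : (0:ℝ) ≤ 1 - t) ht0.le
    (div_nonneg ha.le h1.le) (div_nonneg hb.le h2.le) (by ring : (1-t)+t = 1)
  have h6 : m1^(1-t) ≠ 0 := (Real.rpow_pos_of_pos h1 _).ne'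
  have h7 : m2^t ≠ 0 := (Real.rpow_pos_of_pos h2 _).ne'
  have h5 : M * ((a/m1)^(1-t) * (b/m2)^t) = a^(1-t) * b^t := by
    rw [Real.div_rpow ha.le h1.le, Real.div_rpow hb.le h2.le, hM]
    field_simp
  have h8 : (1-t) * ((m1/M)⁻¹ * a) + t * ((m2/M)⁻¹ * b)
      = M * ((1-t)*(a/m1) + t*(b/m2)) := by
    field_simp
  rw [h8, ← h5]
  exact mul_le_mul_of_nonneg_left hAMGM hMpos.le

lemma comb_scale {m1 m2 r t : ℝ} (h1 : 0 < m1) (h2 : 0 < m2) (hr : 0 < r)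
    (ht0 : 0 < t) (ht1 : t < 1) :
    ((m1 / (m1^(1-t) * m2^t)) * r)^(1-t) * ((m2 / (m1^(1-t) * m2^t)) * r)^t = r := by
  set M := m1^(1-t)*m2^t with hM
  have hMpos : 0 < M := by positivity
  have hc1 : 0 < m1 / M := by positivity
  have hc2 : 0 < m2 / M := by positivity
  rw [Real.mul_rpow hc1.le hr.le, Real.mul_rpow hc2.le hr.le,
      Real.div_rpow h1.le hMpos.le, Real.div_rpow h2.le hMpos.le]
  have h3 : r^(1-t) * r^t = r := by rw [← Real.rpow_add hr]; simp
  have h4 : M^(1-t) * M^t = M := by rw [← Real.rpow_add hMpos]; simp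
  have h6 : m1^(1-t) ≠ 0 := (Real.rpow_pos_of_pos h1 _).ne'
  have h7 : m2^t ≠ 0 := (Real.rpow_pos_of_pos h2 _).ne'
  have h8 : M^(1-t) ≠ 0 := (Real.rpow_pos_of_pos hMpos _).ne'
  have h9 : M^t ≠ 0 := (Real.rpow_pos_of_pos hMpos _).ne'
  field_simp
  calc m1 ^ (1-t) * r^(1-t) * m2^t * r^t = (m1^(1-t) * m2^t) * (r^(1-t) * r^t) := by ring
    _ = M * r := by rw [← hM, h3]
    _ = M^(1-t) * M^t * r := by rw [h4]

theorem bm_conv : ∀ (d : ℕ) (A B : Set (Fin d → ℝ)), IsCompact A → IsCompact B →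
    Convex ℝ A → Convex ℝ B → A.Nonempty → B.Nonempty → ∀ t : ℝ, 0 < t → t < 1 →
    (volume A).toReal ^ (1-t) * (volume B).toReal ^ t
      ≤ (volume ((1-t) • A + t • B)).toReal := by
  intro d
  induction d with
  | zero =>
    intro A B _ _ _ _ hAne hBne t ht0 ht1
    have hU : ∀ (S : Set (Fin 0 → ℝ)), S.Nonempty → S = univ := by
      intro S hS
      obtain ⟨x, hx⟩ := hS
      refine eq_univ_of_forall fun z => ?_
      rwa [Subsingleton.elim z x]
    have h1 : volume (univ : Set (Fin 0 → ℝ)) = 1 := by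
      rw [volume_pi, Measure.pi_univ]; simp
    rw [hU _ ((hAne.smul_set).add (hBne.smul_set)), hU A hAne, hU B hBne, h1]
    simp
  | succ d ih =>
    intro A B hAc hBc hAv hBv hAne hBne t ht0 ht1
    have h1t : (0:ℝ) < 1 - t := by linarith
    set C := (1-t) • A + t • B with hCdef
    have hCc : IsCompact C := (hAc.smul (1-t)).add (hBc.smul t)
    have hCv : Convex ℝ C := (hAv.smul _).add (hBv.smul _)
    have hCne : C.Nonempty := (hAne.smul_set).add (hBne.smul_set)
    have hCfin : volume C ≠ ∞ := hCc.measure_lt_top.ne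
    rcases eq_or_ne (volume A) 0 with hA0 | hA0
    · rw [hA0]
      simp only [ENNReal.toReal_zero, Real.zero_rpow (ne_of_gt h1t), zero_mul]
      exact ENNReal.toReal_nonneg
    rcases eq_or_ne (volume B) 0 with hB0 | hB0
    · rw [hB0]
      simp only [ENNReal.toReal_zero, Real.zero_rpow (ne_of_gt ht0), mul_zero]
      exact ENNReal.toReal_nonneg
    have hAfin : volume A ≠ ∞ := hAc.measure_lt_top.ne
    have hBfin : volume B ≠ ∞ := hBc.measure_lt_top.ne
    -- slices
    set α : ℝ → ℝ≥0∞ := fun y => volume {w : Fin d → ℝ | Fin.cons y w ∈ A} with hαdef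
    set β : ℝ → ℝ≥0∞ := fun y => volume {w : Fin d → ℝ | Fin.cons y w ∈ B} with hβdef
    set γ : ℝ → ℝ≥0∞ := fun y => volume {w : Fin d → ℝ | Fin.cons y w ∈ C} with hγdef
    have hmA : MeasurableSet A := hAc.isClosed.measurableSet
    have hmB : MeasurableSet B := hBc.isClosed.measurableSet
    have hmC : MeasurableSet C := hCc.isClosed.measurableSet
    have hαm : Measurable α := meas_slice_vol hmA
    have hβm : Measurable β := meas_slice_vol hmB
    have hvolA : volume A = ∫⁻ y, α y := fubini_slice hmA
    have hvolB : volume B = ∫⁻ y, β y := fubini_slice hmB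
    have hvolC : volume C = ∫⁻ y, γ y := fubini_slice hmC
    -- compactness and convexity of slices; finiteness bounds
    have slice_sub : ∀ (S : Set (Fin (d+1) → ℝ)) (y : ℝ),
        {w : Fin d → ℝ | Fin.cons y w ∈ S} ⊆ Fin.tail '' S := by
      intro S y w hw
      exact ⟨Fin.cons y w, hw, by simp [Fin.tail_cons]⟩
    have slice_cpt : ∀ (S : Set (Fin (d+1) → ℝ)), IsCompact S → ∀ y : ℝ,
        IsCompact {w : Fin d → ℝ | Fin.cons y w ∈ S} := by
      intro S hS y
      exact IsCompact.of_isClosed_subset (hS.image cont_tail)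
        (hS.isClosed.preimage (cont_cons y)) (slice_sub S y)
    have slice_cvx : ∀ (S : Set (Fin (d+1) → ℝ)), Convex ℝ S → ∀ y : ℝ,
        Convex ℝ {w : Fin d → ℝ | Fin.cons y w ∈ S} := by
      intro S hS y w1 h1 w2 h2 p q hp hq hpq
      have := hS h1 h2 hp hq hpq
      rw [cons_comb] at this
      have hy : p * y + q * y = y := by rw [← add_mul, hpq, one_mul]
      rwa [hy] at this
    have slice_bound : ∀ (S : Set (Fin (d+1) → ℝ)), IsCompact S → ∀ y : ℝ,
        volume {w : Fin d → ℝ | Fin.cons y w ∈ S} ≤ volume (Fin.tail '' S) :=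
      fun S _ y => measure_mono (slice_sub S y)
    have hαfin : ∀ y, α y ≠ ∞ := fun y =>
      ((slice_bound A hAc y).trans_lt (hAc.image cont_tail).measure_lt_top).ne
    have hβfin : ∀ y, β y ≠ ∞ := fun y =>
      ((slice_bound B hBc y).trans_lt (hBc.image cont_tail).measure_lt_top).ne
    have hγfin : ∀ y, γ y ≠ ∞ := fun y =>
      ((slice_bound C hCc y).trans_lt (hCc.image cont_tail).measure_lt_top).ne
    -- sups
    set mα : ℝ≥0∞ := ⨆ y, α y with hmαdef
    set mβ : ℝ≥0∞ := ⨆ y, β y with hmβdef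
    have hmαfin : mα ≠ ∞ :=
      ((iSup_le fun y => slice_bound A hAc y).trans_lt (hAc.image cont_tail).measure_lt_top).ne
    have hmβfin : mβ ≠ ∞ :=
      ((iSup_le fun y => slice_bound B hBc y).trans_lt (hBc.image cont_tail).measure_lt_top).ne
    have hmα0 : mα ≠ 0 := by
      intro h
      apply hA0
      rw [hvolA]
      refine lintegral_eq_zero_iff hαm |>.mpr (ae_of_all _ fun y => ?_)
      have : α y ≤ 0 := h ▸ le_iSup α y
      simpa using le_antisymm this zero_le
    have hmβ0 : mβ ≠ 0 := by
      intro h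
      apply hB0
      rw [hvolB]
      refine lintegral_eq_zero_iff hβm |>.mpr (ae_of_all _ fun y => ?_)
      have : β y ≤ 0 := h ▸ le_iSup β y
      simpa using le_antisymm this zero_le
    -- mixed slice inequality from induction hypothesis
    have hmix : ∀ u v : ℝ, 0 < α u → 0 < β v →
        (α u)^(1-t) * (β v)^t ≤ γ ((1-t)*u + t*v) := by
      intro u v hu hv
      have hsAne : {w : Fin d → ℝ | Fin.cons u w ∈ A}.Nonempty :=
        nonempty_of_measure_ne_zero hu.ne'
      have hsBne : {w : Fin d → ℝ | Fin.cons v w ∈ B}.Nonempty :=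
        nonempty_of_measure_ne_zero hv.ne'
      have hIH := ih _ _ (slice_cpt A hAc u) (slice_cpt B hBc v)
        (slice_cvx A hAv u) (slice_cvx B hBv v) hsAne hsBne t ht0 ht1
      have hsub := slice_comb (A := A) (B := B) (1-t) t u v
      have hle : volume ((1-t) • {w : Fin d → ℝ | Fin.cons u w ∈ A}
          + t • {w : Fin d → ℝ | Fin.cons v w ∈ B}) ≤ γ ((1-t)*u + t*v) :=
        measure_mono hsub
      have hX : (α u)^(1-t) * (β v)^t ≠ ∞ :=
        ENNReal.mul_ne_top (ENNReal.rpow_ne_top_of_nonneg (by linarith) (hαfin u))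
          (ENNReal.rpow_ne_top_of_nonneg ht0.le (hβfin v))
      rw [← ENNReal.toReal_le_toReal hX (hγfin _)]
      rw [ENNReal.toReal_mul, ← ENNReal.toReal_rpow, ← ENNReal.toReal_rpow]
      exact hIH.trans (ENNReal.toReal_mono (hγfin _) hle)
    -- quasiconcavity: superlevel sets are convex
    have hqc : ∀ (S : Set (Fin (d+1) → ℝ)) (φ : ℝ → ℝ≥0∞), IsCompact S → Convex ℝ S →
        (φ = fun y => volume {w : Fin d → ℝ | Fin.cons y w ∈ S}) →
        ∀ r : ℝ≥0∞, 0 < r → Convex ℝ {y | r < φ y} := by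
      intro S φ hSc hSv hφdef r hr u hu v hv p q hp hq hpq
      have hφfin : ∀ y, φ y ≠ ∞ := fun y => hφdef ▸
        ((slice_bound S hSc y).trans_lt (hSc.image cont_tail).measure_lt_top).ne
      rcases eq_or_lt_of_le hp with hp0 | hp0
      · have hq1 : q = 1 := by linarith
        simpa [← hp0, hq1] using hv
      rcases eq_or_lt_of_le hq with hq0 | hq0
      · have hp1 : p = 1 := by linarith
        simpa [← hq0, hp1] using hu
      have hq1 : q < 1 := by linarith
      have hsune : {w : Fin d → ℝ | Fin.cons u w ∈ S}.Nonempty := by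
        have h9 : 0 < φ u := hr.trans hu
        rw [hφdef] at h9
        exact nonempty_of_measure_ne_zero h9.ne'
      have hsvne : {w : Fin d → ℝ | Fin.cons v w ∈ S}.Nonempty := by
        have h9 : 0 < φ v := hr.trans hv
        rw [hφdef] at h9
        exact nonempty_of_measure_ne_zero h9.ne'
      have hIH := ih _ _ (slice_cpt S hSc u) (slice_cpt S hSc v)
        (slice_cvx S hSv u) (slice_cvx S hSv v) hsune hsvne q hq0 hq1
      have hSeq : (1-q) • S + q • S = S := by
        rw [← hSv.add_smul (by linarith : (0:ℝ) ≤ 1 - q) hq]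
        norm_num
      have hsub := slice_comb (A := S) (B := S) (1-q) q u v
      rw [hSeq] at hsub
      have hpe : p = 1 - q := by linarith
      have hle : volume ((1-q) • {w : Fin d → ℝ | Fin.cons u w ∈ S}
          + q • {w : Fin d → ℝ | Fin.cons v w ∈ S}) ≤ φ (p • u + q • v) := by
        rw [hφdef]
        simp only [smul_eq_mul]
        rw [hpe]
        exact measure_mono hsub
      have h8 : (φ u).toReal^(1-q)*(φ v).toReal^q ≤ (φ (p • u + q • v)).toReal := by
        refine le_trans ?_ (ENNReal.toReal_mono (hφfin _) hle)
        rw [hφdef]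
        exact hIH
      have hufin : φ u ≠ ∞ := hφfin u
      have hvfin : φ v ≠ ∞ := hφfin v
      have hupos : (0:ℝ) < (φ u).toReal := ENNReal.toReal_pos (hr.trans hu).ne' hufin
      have hvpos : (0:ℝ) < (φ v).toReal := ENNReal.toReal_pos (hr.trans hv).ne' hvfin
      have hmin := min_le_rpow_comb hupos hvpos hq hq1.le
      have hrlt : r.toReal < min ((φ u).toReal) ((φ v).toReal) := by
        refine lt_min ?_ ?_
        · exact (ENNReal.toReal_lt_toReal (ne_top_of_lt hu) hufin).mpr hu
        · exact (ENNReal.toReal_lt_toReal (ne_top_of_lt hv) hvfin).mpr hv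
      have : r.toReal < (φ (p • u + q • v)).toReal := lt_of_lt_of_le hrlt (hmin.trans h8)
      exact (ENNReal.toReal_lt_toReal (ne_top_of_lt hu) (hφfin _)).mp this
    -- boundedness of superlevel sets
    have hbd : ∀ (S : Set (Fin (d+1) → ℝ)) (φ : ℝ → ℝ≥0∞), IsCompact S →
        (φ = fun y => volume {w : Fin d → ℝ | Fin.cons y w ∈ S}) →
        ∀ r : ℝ≥0∞, 0 < r →
          BddAbove {y | r < φ y} ∧ BddBelow {y | r < φ y} := by
      intro S φ hSc hφdef r hr
      have hsub : {y | r < φ y} ⊆ (fun x : Fin (d+1) → ℝ => x 0) '' S := by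
        intro y hy
        have : 0 < φ y := hr.trans hy
        rw [hφdef] at this
        obtain ⟨w, hw⟩ := nonempty_of_measure_ne_zero this.ne'
        exact ⟨Fin.cons y w, hw, by simp⟩
      have himc : IsCompact ((fun x : Fin (d+1) → ℝ => x 0) '' S) :=
        hSc.image (continuous_apply 0)
      exact ⟨himc.bddAbove.mono hsub, himc.bddBelow.mono hsub⟩
    -- real constants
    set mar := mα.toReal with hmardef
    set mbr := mβ.toReal with hmbrdef
    have hmarpos : 0 < mar := ENNReal.toReal_pos hmα0 hmαfin
    have hmbrpos : 0 < mbr := ENNReal.toReal_pos hmβ0 hmβfin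
    set Mr := mar^(1-t) * mbr^t with hMrdef
    have hMrpos : 0 < Mr := by positivity
    set cα := mar / Mr with hcαdef
    set cβ := mbr / Mr with hcβdef
    have hcαpos : 0 < cα := by positivity
    have hcβpos : 0 < cβ := by positivity
    have hmαeq : mα = ENNReal.ofReal mar := (ENNReal.ofReal_toReal hmαfin).symm
    have hmβeq : mβ = ENNReal.ofReal mbr := (ENNReal.ofReal_toReal hmβfin).symm
    -- level-set volume functions
    set Gα : ℝ → ℝ≥0∞ := fun u => volume {y | ENNReal.ofReal u < α y} with hGαdef
    set Gβ : ℝ → ℝ≥0∞ := fun u => volume {y | ENNReal.ofReal u < β y} with hGβdef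
    set Γ : ℝ → ℝ≥0∞ := fun r => volume {y | ENNReal.ofReal r < γ y} with hΓdef
    have hGαanti : Antitone Gα := by
      intro u u' huu'
      exact measure_mono fun y hy => lt_of_le_of_lt (ENNReal.ofReal_le_ofReal huu') hy
    have hGβanti : Antitone Gβ := by
      intro u u' huu'
      exact measure_mono fun y hy => lt_of_le_of_lt (ENNReal.ofReal_le_ofReal huu') hy
    have hGαm : Measurable Gα := hGαanti.measurable
    have hGβm : Measurable Gβ := hGβanti.measurable
    -- layer cake representations
    have hLCα : ∫⁻ u in Ioi (0:ℝ), Gα u = volume A := by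
      rw [hvolA]
      exact (layercake_fin volume α hαm (volume (Fin.tail '' A))
        (hAc.image cont_tail).measure_lt_top.ne (slice_bound A hAc)).symm
    have hLCβ : ∫⁻ u in Ioi (0:ℝ), Gβ u = volume B := by
      rw [hvolB]
      exact (layercake_fin volume β hβm (volume (Fin.tail '' B))
        (hBc.image cont_tail).measure_lt_top.ne (slice_bound B hBc)).symm
    have hLCγ : volume C = ∫⁻ r in Ioi (0:ℝ), Γ r := by
      rw [hvolC]
      exact layercake_fin volume γ (meas_slice_vol hmC) (volume (Fin.tail '' C))
        (hCc.image cont_tail).measure_lt_top.ne (slice_bound C hCc)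
    -- pointwise comparison of level-set volumes
    have hpt : ∀ r ∈ Ioi (0:ℝ),
        ENNReal.ofReal (1-t) * Gα (cα * r) + ENNReal.ofReal t * Gβ (cβ * r) ≤ Γ r := by
      intro r hr
      rw [mem_Ioi] at hr
      rcases le_or_gt Mr r with hMr | hMr
      · have hα_emp : Gα (cα * r) = 0 := by
          show volume {y | ENNReal.ofReal (cα * r) < α y} = 0
          have hemp : {y | ENNReal.ofReal (cα * r) < α y} = ∅ := by
            refine eq_empty_iff_forall_notMem.mpr fun y hy => ?_
            have h1 : α y ≤ ENNReal.ofReal (cα * r) := by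
              refine le_trans (le_iSup α y) ?_
              rw [← hmαdef, hmαeq]
              refine ENNReal.ofReal_le_ofReal ?_
              rw [hcαdef]
              rw [div_mul_eq_mul_div, le_div_iff₀ hMrpos]
              nlinarith
            exact absurd hy (not_lt.mpr h1)
          rw [hemp]
          exact measure_empty
        have hβ_emp : Gβ (cβ * r) = 0 := by
          show volume {y | ENNReal.ofReal (cβ * r) < β y} = 0
          have hemp : {y | ENNReal.ofReal (cβ * r) < β y} = ∅ := by
            refine eq_empty_iff_forall_notMem.mpr fun y hy => ?_
            have h1 : β y ≤ ENNReal.ofReal (cβ * r) := by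
              refine le_trans (le_iSup β y) ?_
              rw [← hmβdef, hmβeq]
              refine ENNReal.ofReal_le_ofReal ?_
              rw [hcβdef]
              rw [div_mul_eq_mul_div, le_div_iff₀ hMrpos]
              nlinarith
            exact absurd hy (not_lt.mpr h1)
          rw [hemp]
          exact measure_empty
        rw [hα_emp, hβ_emp]
        simp
      · -- main case : r < Mr
        set Sa := {y | ENNReal.ofReal (cα * r) < α y} with hSadef
        set Sb := {y | ENNReal.ofReal (cβ * r) < β y} with hSbdef
        have hlvlα : (0:ℝ≥0∞) < ENNReal.ofReal (cα * r) := ENNReal.ofReal_pos.mpr (by positivity)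
        have hlvlβ : (0:ℝ≥0∞) < ENNReal.ofReal (cβ * r) := ENNReal.ofReal_pos.mpr (by positivity)
        have hSaconv : Convex ℝ Sa := hqc A α hAc hAv hαdef _ hlvlα
        have hSbconv : Convex ℝ Sb := hqc B β hBc hBv hβdef _ hlvlβ
        have hSane : Sa.Nonempty := by
          have h1 : ENNReal.ofReal (cα * r) < mα := by
            rw [hmαeq]
            refine (ENNReal.ofReal_lt_ofReal_iff hmarpos).mpr ?_
            rw [hcαdef, div_mul_eq_mul_div, div_lt_iff₀ hMrpos]
            nlinarith
          obtain ⟨y, hy⟩ := lt_iSup_iff.mp h1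
          exact ⟨y, hy⟩
        have hSbne : Sb.Nonempty := by
          have h1 : ENNReal.ofReal (cβ * r) < mβ := by
            rw [hmβeq]
            refine (ENNReal.ofReal_lt_ofReal_iff hmbrpos).mpr ?_
            rw [hcβdef, div_mul_eq_mul_div, div_lt_iff₀ hMrpos]
            nlinarith
          obtain ⟨y, hy⟩ := lt_iSup_iff.mp h1
          exact ⟨y, hy⟩
        obtain ⟨hSaba, hSabb⟩ := hbd A α hAc hαdef _ hlvlα
        obtain ⟨hSbba, hSbbb⟩ := hbd B β hBc hβdef _ hlvlβ
        -- inclusion into the γ superlevel set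
        have hincl : (1-t) • Sa + t • Sb ⊆ {y | ENNReal.ofReal r < γ y} := by
          rintro x ⟨pu, ⟨u, hu, rfl⟩, pv, ⟨v, hv, rfl⟩, rfl⟩
          simp only [smul_eq_mul, mem_setOf_eq]
          have hαu : ENNReal.ofReal (cα * r) < α u := hu
          have hβv : ENNReal.ofReal (cβ * r) < β v := hv
          have hcc : ((cα*r)^(1-t)) * ((cβ*r)^t) = r := by
            rw [hcαdef, hcβdef, hMrdef]
            exact comb_scale hmarpos hmbrpos hr ht0 ht1
          have hkey : ENNReal.ofReal r
              < (α u)^(1-t) * (β v)^t := by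
            have h4 : ENNReal.ofReal r
                = (ENNReal.ofReal (cα*r))^(1-t) * (ENNReal.ofReal (cβ*r))^t := by
              rw [ENNReal.ofReal_rpow_of_pos (by positivity),
                  ENNReal.ofReal_rpow_of_pos (by positivity),
                  ← ENNReal.ofReal_mul (by positivity), hcc]
            rw [h4]
            exact ENNReal.mul_lt_mul (ENNReal.rpow_lt_rpow hαu h1t)
              (ENNReal.rpow_lt_rpow hβv ht0)
          exact lt_of_lt_of_le hkey (hmix u v (hlvlα.trans hαu) (hlvlβ.trans hβv))
        calc ENNReal.ofReal (1-t) * Gα (cα * r) + ENNReal.ofReal t * Gβ (cβ * r)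
            ≤ volume ((1-t) • Sa + t • Sb) :=
              vol_comb_real hSaconv hSbconv hSane hSbne hSaba hSabb hSbba hSbbb ht0 ht1
          _ ≤ Γ r := measure_mono hincl
    -- integrate
    have hmeas1 : Measurable fun r => ENNReal.ofReal (1-t) * Gα (cα * r) :=
      (hGαm.comp (measurable_const_mul cα)).const_mul _
    have hmeas2 : Measurable fun r => ENNReal.ofReal t * Gβ (cβ * r) :=
      (hGβm.comp (measurable_const_mul cβ)).const_mul _
    have hint1 : ∫⁻ r in Ioi (0:ℝ), Gα (cα * r) = ENNReal.ofReal cα⁻¹ * volume A := by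
      rw [lintegral_scale_Ioi Gα hGαm hcαpos, hLCα]
    have hint2 : ∫⁻ r in Ioi (0:ℝ), Gβ (cβ * r) = ENNReal.ofReal cβ⁻¹ * volume B := by
      rw [lintegral_scale_Ioi Gβ hGβm hcβpos, hLCβ]
    have hbig : ENNReal.ofReal (1-t) * (ENNReal.ofReal cα⁻¹ * volume A)
        + ENNReal.ofReal t * (ENNReal.ofReal cβ⁻¹ * volume B) ≤ volume C := by
      rw [hLCγ]
      calc ENNReal.ofReal (1-t) * (ENNReal.ofReal cα⁻¹ * volume A)
            + ENNReal.ofReal t * (ENNReal.ofReal cβ⁻¹ * volume B)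
          = ∫⁻ r in Ioi (0:ℝ),
              (ENNReal.ofReal (1-t) * Gα (cα * r) + ENNReal.ofReal t * Gβ (cβ * r)) := by
            have hm1 : Measurable fun r => Gα (cα * r) := hGαm.comp (measurable_const_mul cα)
            have hm2 : Measurable fun r => Gβ (cβ * r) := hGβm.comp (measurable_const_mul cβ)
            rw [lintegral_add_left hmeas1, lintegral_const_mul _ hm1,
                lintegral_const_mul _ hm2, hint1, hint2]
        _ ≤ ∫⁻ r in Ioi (0:ℝ), Γ r := by
            refine lintegral_mono_ae ((ae_restrict_iff' measurableSet_Ioi).mpr (ae_of_all _ hpt))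
    -- finish with AM-GM
    set a := (volume A).toReal with hadef
    set bb := (volume B).toReal with hbbdef
    have hapos : 0 < a := ENNReal.toReal_pos hA0 hAfin
    have hbbpos : 0 < bb := ENNReal.toReal_pos hB0 hBfin
    have hfin1 : ENNReal.ofReal (1-t) * (ENNReal.ofReal cα⁻¹ * volume A) ≠ ∞ :=
      ENNReal.mul_ne_top ENNReal.ofReal_ne_top (ENNReal.mul_ne_top ENNReal.ofReal_ne_top hAfin)
    have hfin2 : ENNReal.ofReal t * (ENNReal.ofReal cβ⁻¹ * volume B) ≠ ∞ :=
      ENNReal.mul_ne_top ENNReal.ofReal_ne_top (ENNReal.mul_ne_top ENNReal.ofReal_ne_top hBfin)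
    have htofReal : ((ENNReal.ofReal (1-t) * (ENNReal.ofReal cα⁻¹ * volume A)
        + ENNReal.ofReal t * (ENNReal.ofReal cβ⁻¹ * volume B))).toReal
        = (1-t) * (cα⁻¹ * a) + t * (cβ⁻¹ * bb) := by
      rw [ENNReal.toReal_add hfin1 hfin2, ENNReal.toReal_mul, ENNReal.toReal_mul,
          ENNReal.toReal_mul, ENNReal.toReal_mul, ENNReal.toReal_ofReal h1t.le,
          ENNReal.toReal_ofReal ht0.le, ENNReal.toReal_ofReal (inv_pos.mpr hcαpos).le,
          ENNReal.toReal_ofReal (inv_pos.mpr hcβpos).le, hadef, hbbdef]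
    have hfinal : a^(1-t) * bb^t ≤ (1-t) * (cα⁻¹ * a) + t * (cβ⁻¹ * bb) := by
      rw [hcαdef, hcβdef, hMrdef]
      exact amgm_final hapos hbbpos hmarpos hmbrpos ht0 ht1
    calc a^(1-t) * bb^t ≤ (1-t) * (cα⁻¹ * a) + t * (cβ⁻¹ * bb) := hfinal
      _ = ((ENNReal.ofReal (1-t) * (ENNReal.ofReal cα⁻¹ * volume A)
          + ENNReal.ofReal t * (ENNReal.ofReal cβ⁻¹ * volume B))).toReal := htofReal.symm
      _ ≤ (volume C).toReal := ENNReal.toReal_mono hCfin hbig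

lemma slice_compact {d : ℕ} {S : Set (Fin (d+1) → ℝ)} (hS : IsCompact S) (y : ℝ) :
    IsCompact {w : Fin d → ℝ | Fin.cons y w ∈ S} := by
  refine IsCompact.of_isClosed_subset (hS.image cont_tail)
    (hS.isClosed.preimage (cont_cons y)) ?_
  intro w hw
  exact ⟨Fin.cons y w, hw, by simp [Fin.tail_cons]⟩

lemma slice_convex {d : ℕ} {S : Set (Fin (d+1) → ℝ)} (hS : Convex ℝ S) (y : ℝ) :
    Convex ℝ {w : Fin d → ℝ | Fin.cons y w ∈ S} := by
  intro w1 h1 w2 h2 p q hp hq hpq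
  have := hS h1 h2 hp hq hpq
  rw [cons_comb] at this
  have hy : p * y + q * y = y := by rw [← add_mul, hpq, one_mul]
  rwa [hy] at this

theorem slice_volume_ineq (k : ℕ) (K : Set (Fin (k + 2) → ℝ))
    (hKc : IsCompact K) (hconv : Convex ℝ K)
    (hint : (interior K).Nonempty)
    (P : ℝ → Set (Fin (k + 1) → ℝ))
    (hP : ∀ y, P y = {w | Fin.cons y w ∈ K})
    (a b c : ℝ) (hb : 0 ≤ b) (hc : 0 ≤ c) :
    (volume (P a)).toReal * (volume (P (a + b + c))).toReal ≤
      (volume (P (a + b))).toReal * (volume (P (a + c))).toReal := by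
  rcases eq_or_lt_of_le hb with hb0 | hb0
  · rw [← hb0]
    simp only [add_zero]
    exact le_refl _
  rcases eq_or_lt_of_le hc with hc0 | hc0
  · rw [← hc0]
    simp only [add_zero]
    rw [mul_comm]
  have hPc : ∀ y, IsCompact (P y) := fun y => by rw [hP y]; exact slice_compact hKc y
  have hPv : ∀ y, Convex ℝ (P y) := fun y => by rw [hP y]; exact slice_convex hconv y
  have hPfin : ∀ y, volume (P y) ≠ ∞ := fun y => (hPc y).measure_lt_top.ne
  rcases eq_or_ne (volume (P a)) 0 with hA0 | hA0
  · rw [hA0]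
    simp only [ENNReal.toReal_zero, zero_mul]
    positivity
  rcases eq_or_ne (volume (P (a+b+c))) 0 with hD0 | hD0
  · rw [hD0]
    simp only [ENNReal.toReal_zero, mul_zero]
    positivity
  have hAne : (P a).Nonempty := nonempty_of_measure_ne_zero hA0
  have hDne : (P (a+b+c)).Nonempty := nonempty_of_measure_ne_zero hD0
  have hbc : 0 < b + c := by linarith
  set t1 := b / (b+c) with ht1def
  have ht10 : 0 < t1 := div_pos hb0 hbc
  have ht11 : t1 < 1 := (div_lt_one hbc).mpr (by linarith)
  -- key inclusion lemma
  have hincl : ∀ s : ℝ, 0 ≤ s → s ≤ 1 →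
      (1-s) • P a + s • P (a+b+c) ⊆ P ((1-s)*a + s*(a+b+c)) := by
    intro s hs0 hs1
    rintro x ⟨pu, ⟨w1, hw1, rfl⟩, pv, ⟨w2, hw2, rfl⟩, rfl⟩
    rw [hP] at hw1 hw2 ⊢
    show (Fin.cons ((1-s)*a + s*(a+b+c)) ((1-s) • w1 + s • w2) : Fin (k+2) → ℝ) ∈ K
    rw [← cons_comb]
    exact hconv hw1 hw2 (by linarith) hs0 (by ring)
  have key : ∀ s : ℝ, 0 < s → s < 1 →
      (volume (P a)).toReal ^ (1-s) * (volume (P (a+b+c))).toReal ^ s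
        ≤ (volume (P ((1-s)*a + s*(a+b+c)))).toReal := by
    intro s hs0 hs1
    refine (bm_conv (k+1) (P a) (P (a+b+c)) (hPc a) (hPc _) (hPv a) (hPv _)
      hAne hDne s hs0 hs1).trans ?_
    exact ENNReal.toReal_mono (hPfin _) (measure_mono (hincl s hs0.le hs1.le))
  have hab : (1-t1)*a + t1*(a+b+c) = a + b := by
    rw [ht1def]
    field_simp
    ring
  have hac : (1-(1-t1))*a + (1-t1)*(a+b+c) = a + c := by
    rw [ht1def]
    field_simp
    ring
  have h1 := key t1 ht10 ht11
  have h2 := key (1-t1) (by linarith) (by linarith)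
  rw [hab] at h1
  rw [hac] at h2
  have hsimp : 1 - (1-t1) = t1 := by ring
  rw [hsimp] at h2
  have hapos : 0 < (volume (P a)).toReal := ENNReal.toReal_pos hA0 (hPfin a)
  have hdpos : 0 < (volume (P (a+b+c))).toReal := ENNReal.toReal_pos hD0 (hPfin _)
  calc (volume (P a)).toReal * (volume (P (a+b+c))).toReal
      = ((volume (P a)).toReal ^ (1-t1) * (volume (P (a+b+c))).toReal ^ t1)
        * ((volume (P a)).toReal ^ t1 * (volume (P (a+b+c))).toReal ^ (1-t1)) := by
        rw [mul_mul_mul_comm, ← Real.rpow_add hapos, ← Real.rpow_add hdpos]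
        norm_num
    _ ≤ (volume (P (a+b))).toReal * (volume (P (a+c))).toReal := by
        refine mul_le_mul h1 h2 ?_ ?_
        · positivity
        · exact ENNReal.toReal_nonneg
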